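/- Given a causal setting ⟨z, φ⟩ with achievement causal chain BSChain(C) (Batusov–Soutchanski) and counterfactual achievement cause z' (the minimal prefix cause), every action–prefix pair ⟨a, p⟩ in BSChain(C) satisfies p ++ [a] ⊆ z'. Hence BSChain(C) ⊆ Chain(z'), where Chain(z') = {⟨a, p⟩ : p ++ [a] is a prefix of z'}. -/

import Mathlib

/-- Every action–prefix pair in the Batusov–Soutchanski achievement causal chain
is contained (as a prefix `p ++ [a]`) in the counterfactual achievement cause `z'`,
hence `BSChain(C) ⊆ Chain(z')`. -/
theorem bschain_subset_chain {A : Type*} (z z' : List A) (Sat : List A → Prop)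
    (chain : List (A × List A)) (an : A) (pn : List A)
    (hns : ¬ Sat []) (hsz : Sat z)
    (hz' : z' <+: z)
    -- condition (i) of the achievement cause
    (hcondi : ∀ z'', z' <+: z'' → z'' <+: z → Sat z'')
    -- the last element of the chain is ⟨aₙ, pₙ⟩
    (hlast : chain.getLast? = some (an, pn))
    -- ⟨aₙ, pₙ⟩ is a direct cause pair
    (hpa : (pn ++ [an]) <+: z)
    (hnp : ¬ Sat pn)
    (hdir : ∀ z'', (pn ++ [an]) <+: z'' → z'' <+: z → Sat z'')
    -- every pair of the chain occurs within the last pair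
    (hwithin : ∀ pr ∈ chain, (pr.2 ++ [pr.1]) <+: (pn ++ [an])) :
    ∀ pr ∈ chain, (pr.2 ++ [pr.1]) <+: z' := by
  have hpn_z : pn <+: z := ((pn.prefix_append [an]).trans hpa)
  have key : (pn ++ [an]) <+: z' := by
    rcases List.prefix_or_prefix_of_prefix hz' hpa with h | h
    · -- z' <+: pn ++ [an]
      rcases Nat.lt_or_ge z'.length (pn ++ [an]).length with hl | hl
      · have hl' : z'.length ≤ pn.length := by
          simpa using Nat.lt_succ_iff.mp (by simpa using hl)
        have : z' <+: pn := List.prefix_of_prefix_length_le hz' hpn_z hl'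
        exact absurd (hcondi pn this hpn_z) hnp
      · have : z' = pn ++ [an] :=
          List.IsPrefix.eq_of_length h (Nat.le_antisymm h.length_le hl)
        exact this ▸ List.prefix_refl _
    · exact h
  intro pr hpr
  exact (hwithin pr hpr).trans key
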